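/- Suppose the learning rate is delayed: f(l) = 0 for all l < L*, where L* ≥ 1 is an integer. Let w'(·,·) denote the winning probability defined exactly as w but with the shifted learning rate l ↦ f(l + L*). Then for all integers k* with L* + 1 ≤ k* ≤ k and all T ≥ 0: w(k,T) ≤ (1 - u(k*, L*)) + w'(k - k*, T). -/

import Mathlib

lemma aux_q_nonneg (x y z : ℝ) (hx : 0 ≤ x) (hy : 0 ≤ y) (hz : 0 ≤ z)
    (q : ℕ → ℕ → ℝ) (hq00 : q 0 0 = 1)
    (hqn0 : ∀ n, q (n + 1) 0 = x * q n 0)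
    (hq0m : ∀ m, q 0 (m + 1) = z * q 0 m)
    (hqrec : ∀ n m, q (n + 1) (m + 1) = x * q n (m + 1) + y * q n m + z * q (n + 1) m) :
    ∀ m n, 0 ≤ q n m := by
  intro m
  induction m with
  | zero =>
    intro n
    induction n with
    | zero => rw [hq00]; norm_num
    | succ n ih => rw [hqn0]; exact mul_nonneg hx ih
  | succ m ihm =>
    intro n
    induction n with
    | zero => rw [hq0m]; exact mul_nonneg hz (ihm 0)
    | succ n ihn =>
      rw [hqrec]
      exact add_nonneg (add_nonneg (mul_nonneg hx ihn) (mul_nonneg hy (ihm n)))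
        (mul_nonneg hz (ihm (n + 1)))

lemma aux_Gzero (x y z : ℝ) (hxyz : x + y + z = 1)
    (q : ℕ → ℕ → ℝ) (hq00 : q 0 0 = 1)
    (hqn0 : ∀ n, q (n + 1) 0 = x * q n 0) :
    ∀ b, (y + z) * (∑ n ∈ Finset.range b, q n 0) + q b 0 = 1 := by
  intro b
  induction b with
  | zero => simp [hq00]
  | succ b ih =>
    rw [Finset.sum_range_succ, hqn0]
    linear_combination ih + q b 0 * hxyz

lemma aux_Srec (x y z : ℝ) (q : ℕ → ℕ → ℝ)
    (hq0m : ∀ m, q 0 (m + 1) = z * q 0 m)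
    (hqrec : ∀ n m, q (n + 1) (m + 1) = x * q n (m + 1) + y * q n m + z * q (n + 1) m) :
    ∀ b m, (∑ n ∈ Finset.range (b + 1), q n (m + 1))
      = x * (∑ n ∈ Finset.range b, q n (m + 1)) + y * (∑ n ∈ Finset.range b, q n m)
        + z * (∑ n ∈ Finset.range (b + 1), q n m) := by
  intro b m
  rw [Finset.sum_range_succ' (fun n => q n (m + 1)) b,
      Finset.sum_range_succ' (fun n => q n m) b, hq0m]
  simp only [hqrec]
  rw [Finset.sum_add_distrib, Finset.sum_add_distrib, ← Finset.mul_sum, ← Finset.mul_sum,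
      ← Finset.mul_sum]
  ring

lemma aux_Gle (x y z : ℝ) (hx : 0 ≤ x) (hy : 0 ≤ y) (hz : 0 ≤ z) (hxyz : x + y + z = 1)
    (q : ℕ → ℕ → ℝ) (hq00 : q 0 0 = 1)
    (hqn0 : ∀ n, q (n + 1) 0 = x * q n 0)
    (hq0m : ∀ m, q 0 (m + 1) = z * q 0 m)
    (hqrec : ∀ n m, q (n + 1) (m + 1) = x * q n (m + 1) + y * q n m + z * q (n + 1) m) :
    ∀ m b, (y + z) * (∑ n ∈ Finset.range b, q n m) + q b m ≤ 1 := by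
  have hqnn := aux_q_nonneg x y z hx hy hz q hq00 hqn0 hq0m hqrec
  have hq0le : ∀ m, q 0 m ≤ 1 := by
    intro m
    induction m with
    | zero => rw [hq00]
    | succ m ih =>
      rw [hq0m]
      calc z * q 0 m ≤ 1 * 1 := mul_le_mul (by linarith) ih (hqnn m 0) one_pos.le
      _ = 1 := by norm_num
  intro m
  induction m with
  | zero => intro b; exact le_of_eq (aux_Gzero x y z hxyz q hq00 hqn0 b)
  | succ m ihm =>
    intro b
    induction b with
    | zero =>
      rw [Finset.sum_range_zero, mul_zero, zero_add, hq0m]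
      calc z * q 0 m ≤ 1 * 1 := mul_le_mul (by linarith) (hq0le m) (hqnn m 0) one_pos.le
      _ = 1 := by norm_num
    | succ b ihb =>
      have e : (y + z) * (∑ n ∈ Finset.range (b + 1), q n (m + 1)) + q (b + 1) (m + 1)
          = x * ((y + z) * (∑ n ∈ Finset.range b, q n (m + 1)) + q b (m + 1))
            + y * ((y + z) * (∑ n ∈ Finset.range b, q n m) + q b m)
            + z * ((y + z) * (∑ n ∈ Finset.range (b + 1), q n m) + q (b + 1) m) := by
        rw [aux_Srec x y z q hq0m hqrec b m, hqrec b m]; ring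
      rw [e]
      have k1 := mul_le_mul_of_nonneg_left ihb hx
      have k2 := mul_le_mul_of_nonneg_left (ihm b) hy
      have k3 := mul_le_mul_of_nonneg_left (ihm (b + 1)) hz
      linarith


/-- **Delayed learning decomposition (Theorem 5, inequality (12)).**
If `f l = 0` for `l < L*`, then the winning probability `w(k,T) = W 0 0 T` satisfies
`w(k,T) ≤ (1 - u(k*,L*)) + w'(k-k*,T)` for every `L*+1 ≤ k* ≤ k` and `T ≥ 0`, where
`w'` is the winning probability for the shifted learning rate `l ↦ f (l + L*)` and
`u(k*,L*)` is the probability that at most `k*` progressive moves occur before the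
defender's level reaches `L*`. -/
theorem delayed_learning_decomposition
    (p h γ : ℝ) (hp : 0 < p) (hh : 0 ≤ h) (hph : p + h ≤ 1)
    (hγ0 : 0 < γ) (hγ1 : γ < 1)
    (f : ℕ → ℝ) (hf0 : ∀ l, 0 ≤ f l) (hf1 : ∀ l, f l ≤ 1)
    (m1 m2 m3 m4 : ℕ → ℝ)
    (hm1 : ∀ l, m1 l = f l * (1 - γ) + (1 - f l) * (1 - γ) * (1 - p - h))
    (hm2 : ∀ l, m2 l = (1 - f l) * (1 - γ) * p)
    (hm3 : ∀ l, m3 l = (1 - f l) * γ * p)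
    (hm4 : ∀ l, m4 l = (1 - f l) * (1 - γ) * h + f l * γ + (1 - f l) * γ * (1 - p))
    (Lstar : ℕ) (hLstar : 1 ≤ Lstar)
    (hdelay : ∀ l, l < Lstar → f l = 0)
    (k : ℕ) (hk : 1 ≤ k)
    (W : ℕ → ℕ → ℕ → ℝ)
    (hWwin : ∀ i l t, k ≤ i → W i l t = 1)
    (hWzero : ∀ i l, i < k → W i l 0 = 0)
    (hWrec : ∀ i l t, i < k →
      W i l (t + 1) = m1 l * W i l t + m2 l * W (i + 1) l t
        + m3 l * W (i + 1) (l + 1) t + m4 l * W i (l + 1) t)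
    (kstar : ℕ) (hkstar1 : Lstar + 1 ≤ kstar) (hkstar2 : kstar ≤ k)
    (W' : ℕ → ℕ → ℕ → ℝ)
    (hW'win : ∀ i l t, k - kstar ≤ i → W' i l t = 1)
    (hW'zero : ∀ i l, i < k - kstar → W' i l 0 = 0)
    (hW'rec : ∀ i l t, i < k - kstar →
      W' i l (t + 1) = m1 (l + Lstar) * W' i l t + m2 (l + Lstar) * W' (i + 1) l t
        + m3 (l + Lstar) * W' (i + 1) (l + 1) t + m4 (l + Lstar) * W' i (l + 1) t)
    (x y z : ℝ)
    (hx : x = (1 - γ) * p / (γ + (1 - γ) * (p + h)))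
    (hy : y = γ * p / (γ + (1 - γ) * (p + h)))
    (hz : z = 1 - x - y)
    (q : ℕ → ℕ → ℝ)
    (hq00 : q 0 0 = 1)
    (hqn0 : ∀ n, q (n + 1) 0 = x * q n 0)
    (hq0m : ∀ m, q 0 (m + 1) = z * q 0 m)
    (hqrec : ∀ n m, q (n + 1) (m + 1) = x * q n (m + 1) + y * q n m + z * q (n + 1) m)
    (T : ℕ) :
    W 0 0 T ≤
      (1 - ((∑ n ∈ Finset.range kstar, q n (Lstar - 1)) * (y + z)
              + q kstar (Lstar - 1) * z))
        + W' 0 0 T := by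
  -- basic positivity facts
  have hs0 : (0:ℝ) < γ + (1 - γ) * (p + h) := by nlinarith
  have hx0 : 0 ≤ x := by
    rw [hx]; exact div_nonneg (mul_nonneg (by linarith) hp.le) hs0.le
  have hy0 : 0 ≤ y := by
    rw [hy]; exact div_nonneg (mul_nonneg hγ0.le hp.le) hs0.le
  have hz0 : 0 ≤ z := by
    have hple : p ≤ γ + (1 - γ) * (p + h) := by nlinarith
    have key : (1 - γ) * p / (γ + (1 - γ) * (p + h)) + γ * p / (γ + (1 - γ) * (p + h)) ≤ 1 := by
      rw [← add_div, div_le_one hs0]; nlinarith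
    rw [hz, hx, hy]; linarith
  have hxyz1 : x + y + z = 1 := by rw [hz]; ring
  have hqnn := aux_q_nonneg x y z hx0 hy0 hz0 q hq00 hqn0 hq0m hqrec
  have hGzero := aux_Gzero x y z hxyz1 q hq00 hqn0
  have hGle := aux_Gle x y z hx0 hy0 hz0 hxyz1 q hq00 hqn0 hq0m hqrec
  have hVle1 : ∀ b m, (y + z) * (∑ n ∈ Finset.range b, q n m) + z * q b m ≤ 1 := by
    intro b m
    have h1 := hGle m b
    have h2 : z * q b m ≤ q b m := by
      have h3 := mul_nonneg (show (0:ℝ) ≤ 1 - z by linarith) (hqnn m b)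
      nlinarith
    linarith
  -- transition coefficient facts
  have h1γ : (0:ℝ) ≤ 1 - γ := by linarith
  have h1ph : (0:ℝ) ≤ 1 - p - h := by linarith
  have h1p : (0:ℝ) ≤ 1 - p := by linarith
  have hfl : ∀ l, 0 ≤ 1 - f l := fun l => by linarith [hf1 l]
  have hm1n : ∀ l, 0 ≤ m1 l := fun l => by
    rw [hm1]
    exact add_nonneg (mul_nonneg (hf0 l) h1γ) (mul_nonneg (mul_nonneg (hfl l) h1γ) h1ph)
  have hm2n : ∀ l, 0 ≤ m2 l := fun l => by
    rw [hm2]; exact mul_nonneg (mul_nonneg (hfl l) h1γ) hp.le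
  have hm3n : ∀ l, 0 ≤ m3 l := fun l => by
    rw [hm3]; exact mul_nonneg (mul_nonneg (hfl l) hγ0.le) hp.le
  have hm4n : ∀ l, 0 ≤ m4 l := fun l => by
    rw [hm4]
    exact add_nonneg (add_nonneg (mul_nonneg (mul_nonneg (hfl l) h1γ) hh)
      (mul_nonneg (hf0 l) hγ0.le)) (mul_nonneg (mul_nonneg (hfl l) hγ0.le) h1p)
  have hmsum : ∀ l, m1 l + m2 l + m3 l + m4 l = 1 := fun l => by
    rw [hm1, hm2, hm3, hm4]; ring
  -- basic bounds on W, W'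
  have hW'nn : ∀ t i l, 0 ≤ W' i l t := by
    intro t
    induction t with
    | zero =>
      intro i l
      by_cases hi : k - kstar ≤ i
      · rw [hW'win i l 0 hi]; norm_num
      · exact (hW'zero i l (by omega)).ge
    | succ t ih =>
      intro i l
      by_cases hi : k - kstar ≤ i
      · rw [hW'win i l _ hi]; norm_num
      · rw [hW'rec i l t (by omega)]
        exact add_nonneg (add_nonneg (add_nonneg (mul_nonneg (hm1n _) (ih i l))
          (mul_nonneg (hm2n _) (ih (i + 1) l))) (mul_nonneg (hm3n _) (ih (i + 1) (l + 1))))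
          (mul_nonneg (hm4n _) (ih i (l + 1)))
  have hWle1 : ∀ t i l, W i l t ≤ 1 := by
    intro t
    induction t with
    | zero =>
      intro i l
      by_cases hi : i < k
      · rw [hWzero i l hi]; norm_num
      · rw [hWwin i l 0 (by omega)]
    | succ t ih =>
      intro i l
      by_cases hi : i < k
      · rw [hWrec i l t hi]
        have k1 := mul_le_mul_of_nonneg_left (ih i l) (hm1n l)
        have k2 := mul_le_mul_of_nonneg_left (ih (i + 1) l) (hm2n l)
        have k3 := mul_le_mul_of_nonneg_left (ih (i + 1) (l + 1)) (hm3n l)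
        have k4 := mul_le_mul_of_nonneg_left (ih i (l + 1)) (hm4n l)
        have hs := hmsum l
        linarith
      · rw [hWwin i l _ (by omega)]
  have hW'mono : ∀ t i l, W' i l t ≤ W' i l (t + 1) := by
    intro t
    induction t with
    | zero =>
      intro i l
      by_cases hi : k - kstar ≤ i
      · rw [hW'win i l 0 hi, hW'win i l 1 hi]
      · rw [hW'zero i l (by omega)]; exact hW'nn 1 i l
    | succ t ih =>
      intro i l
      by_cases hi : k - kstar ≤ i
      · rw [hW'win i l _ hi, hW'win i l _ hi]
      · rw [hW'rec i l t (by omega), hW'rec i l (t + 1) (by omega)]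
        have k1 := mul_le_mul_of_nonneg_left (ih i l) (hm1n (l + Lstar))
        have k2 := mul_le_mul_of_nonneg_left (ih (i + 1) l) (hm2n (l + Lstar))
        have k3 := mul_le_mul_of_nonneg_left (ih (i + 1) (l + 1)) (hm3n (l + Lstar))
        have k4 := mul_le_mul_of_nonneg_left (ih i (l + 1)) (hm4n (l + Lstar))
        linarith
  -- Claim A : once level reaches Lstar, compare with shifted game
  have claimA : ∀ t c i l, i ≤ kstar + c → W i (Lstar + l) t ≤ W' c l t := by
    intro t
    induction t with
    | zero =>
      intro c i l hic
      by_cases hik : i < k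
      · rw [hWzero _ _ hik]; exact hW'nn 0 c l
      · rw [hWwin _ _ _ (by omega), hW'win c l 0 (by omega)]
    | succ t ih =>
      intro c i l hic
      by_cases hik : i < k
      · by_cases hc : k - kstar ≤ c
        · rw [hW'win c l _ hc]; exact hWle1 _ _ _
        · rw [hWrec i (Lstar + l) t hik, hW'rec c l t (by omega)]
          rw [Nat.add_comm l Lstar]
          have i1 := ih c i l hic
          have i2 := ih (c + 1) (i + 1) l (by omega)
          have i3 := ih (c + 1) (i + 1) (l + 1) (by omega)
          have i4 := ih c i (l + 1) hic
          rw [(by omega : Lstar + (l + 1) = Lstar + l + 1)] at i3 i4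
          have k1 := mul_le_mul_of_nonneg_left i1 (hm1n (Lstar + l))
          have k2 := mul_le_mul_of_nonneg_left i2 (hm2n (Lstar + l))
          have k3 := mul_le_mul_of_nonneg_left i3 (hm3n (Lstar + l))
          have k4 := mul_le_mul_of_nonneg_left i4 (hm4n (Lstar + l))
          linarith
      · rw [hWwin _ _ _ (by omega), hW'win c l _ (by omega)]
  -- Claim B : pre-learning phase bound
  have claimB : ∀ t, ∀ b m i l, i + b = kstar → l + (m + 1) = Lstar →
      W i l t ≤ (1 - ((y + z) * (∑ n ∈ Finset.range b, q n m) + z * q b m)) + W' 0 0 t := by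
    intro t
    induction t with
    | zero =>
      intro b m i l hib hlm
      by_cases hik : i < k
      · rw [hWzero i l hik]
        have h1 := hVle1 b m
        have h2 := hW'nn 0 0 0
        linarith
      · rw [hWwin i l 0 (by omega), hW'win 0 0 0 (by omega)]
        have h1 := hVle1 b m
        linarith
    | succ t ih =>
      intro b m i l hib hlm
      by_cases hik : i < k
      · have hfz : f l = 0 := hdelay l (by omega)
        have e1 : m1 l = 1 - (γ + (1 - γ) * (p + h)) := by rw [hm1, hfz]; ring
        have e2 : m2 l = (γ + (1 - γ) * (p + h)) * x := by
          rw [hm2, hfz, hx]; field_simp; ring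
        have e3 : m3 l = (γ + (1 - γ) * (p + h)) * y := by
          rw [hm3, hfz, hy]; field_simp; ring
        have e4 : m4 l = (γ + (1 - γ) * (p + h)) * z := by
          rw [hm4, hfz, hz, hx, hy]; field_simp; ring
        have hcomb : ∀ (V V2 V3 V4 : ℝ),
            W i l t ≤ (1 - V) + W' 0 0 t →
            W (i + 1) l t ≤ (1 - V2) + W' 0 0 t →
            W (i + 1) (l + 1) t ≤ (1 - V3) + W' 0 0 t →
            W i (l + 1) t ≤ (1 - V4) + W' 0 0 t →
            V = x * V2 + y * V3 + z * V4 →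
            W i l (t + 1) ≤ (1 - V) + W' 0 0 (t + 1) := by
          intro V V2 V3 V4 h1 h2 h3 h4 hid
          rw [hWrec i l t hik]
          have hw := hW'mono t 0 0
          have k1 := mul_le_mul_of_nonneg_left h1 (hm1n l)
          have k2 := mul_le_mul_of_nonneg_left h2 (hm2n l)
          have k3 := mul_le_mul_of_nonneg_left h3 (hm3n l)
          have k4 := mul_le_mul_of_nonneg_left h4 (hm4n l)
          have e : m1 l * ((1 - V) + W' 0 0 t) + m2 l * ((1 - V2) + W' 0 0 t)
              + m3 l * ((1 - V3) + W' 0 0 t) + m4 l * ((1 - V4) + W' 0 0 t)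
              = (1 - V) + W' 0 0 t := by
            rw [e1, e2, e3, e4, hid]
            linear_combination ((γ + (1 - γ) * (p + h)) * (1 + W' 0 0 t)) * hxyz1
          linarith
        rcases b with _ | b
        · rcases m with _ | m
          · -- b = 0, m = 0
            refine hcomb _ 0 0 1 (ih 0 0 i l hib hlm) ?_ ?_ ?_ ?_
            · have w1 := hWle1 t (i + 1) l
              have w2 := hW'nn t 0 0
              linarith
            · have w1 := hWle1 t (i + 1) (l + 1)
              have w2 := hW'nn t 0 0
              linarith
            · have hA : W i Lstar t ≤ W' 0 0 t := claimA t 0 i 0 (by omega)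
              rw [(by omega : l + 1 = Lstar)]
              linarith
            · rw [Finset.sum_range_zero, hq00]; ring
          · -- b = 0, m+1
            refine hcomb _ 0 0
              ((y + z) * (∑ n ∈ Finset.range 0, q n m) + z * q 0 m)
              (ih 0 (m + 1) i l hib hlm) ?_ ?_ (ih 0 m i (l + 1) (by omega) (by omega)) ?_
            · have w1 := hWle1 t (i + 1) l
              have w2 := hW'nn t 0 0
              linarith
            · have w1 := hWle1 t (i + 1) (l + 1)
              have w2 := hW'nn t 0 0
              linarith
            · simp only [Finset.sum_range_zero, mul_zero, zero_add, hq0m]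
        · rcases m with _ | m
          · -- b+1, m = 0
            refine hcomb _ ((y + z) * (∑ n ∈ Finset.range b, q n 0) + z * q b 0) 1 1
              (ih (b + 1) 0 i l hib hlm) (ih b 0 (i + 1) l (by omega) (by omega)) ?_ ?_ ?_
            · have hA : W (i + 1) Lstar t ≤ W' 0 0 t := claimA t 0 (i + 1) 0 (by omega)
              rw [(by omega : l + 1 = Lstar)]
              linarith
            · have hA : W i Lstar t ≤ W' 0 0 t := claimA t 0 i 0 (by omega)
              rw [(by omega : l + 1 = Lstar)]
              linarith
            · rw [Finset.sum_range_succ, hqn0 b]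
              linear_combination (1 - x) * hGzero b + (q b 0 - 1) * hxyz1
          · -- b+1, m+1
            refine hcomb _
              ((y + z) * (∑ n ∈ Finset.range b, q n (m + 1)) + z * q b (m + 1))
              ((y + z) * (∑ n ∈ Finset.range b, q n m) + z * q b m)
              ((y + z) * (∑ n ∈ Finset.range (b + 1), q n m) + z * q (b + 1) m)
              (ih (b + 1) (m + 1) i l hib hlm)
              (ih b (m + 1) (i + 1) l (by omega) (by omega))
              (ih b m (i + 1) (l + 1) (by omega) (by omega))
              (ih (b + 1) m i (l + 1) (by omega) (by omega)) ?_
            rw [aux_Srec x y z q hq0m hqrec b m, hqrec b m]; ring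
      · rw [hWwin i l _ (by omega), hW'win 0 0 _ (by omega)]
        have h1 := hVle1 b m
        linarith
  have hfin := claimB T kstar (Lstar - 1) 0 0 (by omega) (by omega)
  have heq : (1 - ((y + z) * (∑ n ∈ Finset.range kstar, q n (Lstar - 1))
        + z * q kstar (Lstar - 1))) + W' 0 0 T
      = (1 - ((∑ n ∈ Finset.range kstar, q n (Lstar - 1)) * (y + z)
        + q kstar (Lstar - 1) * z)) + W' 0 0 T := by ring
  rw [heq] at hfin
  exact hfin
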